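/- Let Q ⊆ ℝ^I be a nonempty closed convex subset of the hyperplane {q : Σᵢ qᵢ = 0}, and q(b) the Euclidean projection of b onto Q. For any i and any b, b' differing only in coordinate i with δ := b'ᵢ - bᵢ > 0, we have qᵢ(b') - qᵢ(b) ≤ ((I-1)/I)·δ. -/

import Mathlib

open Finset RealInnerProductSpace

set_option maxHeartbeats 1000000 in
/-- For Euclidean projection q(·) onto a nonempty closed convex subset Q of
the zero-sum hyperplane in ℝ^I (I ≥ 2), if b' differs from b only in coordinate i with
δ = b'ᵢ - bᵢ > 0, then qᵢ(b') - qᵢ(b) ≤ ((I-1)/I)·δ. -/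
theorem stmt11 (I : ℕ) (hI : 2 ≤ I) (Q : Set (EuclideanSpace ℝ (Fin I)))
    (hQne : Q.Nonempty) (hQc : IsClosed Q) (hQconv : Convex ℝ Q)
    (hQsub : Q ⊆ {x : EuclideanSpace ℝ (Fin I) | (∑ j, x j) = 0})
    (q : EuclideanSpace ℝ (Fin I) → EuclideanSpace ℝ (Fin I))
    (hproj : ∀ b, q b ∈ Q ∧ ∀ y ∈ Q, ‖b - q b‖ ≤ ‖b - y‖)
    (i : Fin I) (b b' : EuclideanSpace ℝ (Fin I))
    (hdiff : ∀ j, j ≠ i → b' j = b j) (δ : ℝ) (hδ : δ = b' i - b i) (hpos : 0 < δ) :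
    q b' i - q b i ≤ (((I : ℝ) - 1) / (I : ℝ)) * δ := by
  haveI : Nonempty Q := hQne.to_subtype
  -- variational inequality for the projection
  have hvar : ∀ x : EuclideanSpace ℝ (Fin I), ∀ z ∈ Q,
      ⟪x - q x, z - q x⟫ ≤ 0 := by
    intro x
    have hmem := (hproj x).1
    have hmin := (hproj x).2
    have hbdd : BddBelow (Set.range fun w : Q => ‖x - (w : EuclideanSpace ℝ (Fin I))‖) := by
      refine ⟨0, ?_⟩
      rintro a ⟨w, rfl⟩
      exact norm_nonneg _
    have hinf : ‖x - q x‖ = ⨅ w : Q, ‖x - (w : EuclideanSpace ℝ (Fin I))‖ := by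
      apply le_antisymm
      · exact le_ciInf fun w => hmin w w.2
      · exact ciInf_le hbdd (⟨q x, hmem⟩ : Q)
    exact (norm_eq_iInf_iff_real_inner_le_zero hQconv hmem).1 hinf
  set v : EuclideanSpace ℝ (Fin I) := q b' - q b with hvdef
  have h1 : ⟪b - q b, v⟫ ≤ 0 := by
    have := hvar b (q b') (hproj b').1
    simpa [hvdef] using this
  have h2 : (0:ℝ) ≤ ⟪b' - q b', v⟫ := by
    have := hvar b' (q b) (hproj b).1
    have h' : ⟪b' - q b', -v⟫ ≤ 0 := by
      have hneg : q b - q b' = -v := by simp [hvdef]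
      rwa [← hneg]
    rw [inner_neg_right] at h'
    linarith
  -- firm nonexpansiveness
  have hfirm : ⟪v, v⟫ ≤ ⟪b' - b, v⟫ := by
    have key : ⟪b' - b, v⟫ - ⟪v, v⟫ = ⟪b' - q b', v⟫ - ⟪b - q b, v⟫ := by
      rw [← inner_sub_left, ← inner_sub_left]
      rw [hvdef]
      abel
    linarith
  -- compute inner products coordinatewise
  have hinner1 : ⟪b' - b, v⟫ = δ * v i := by
    rw [PiLp.inner_apply]
    have : ∀ j : Fin I, ((b' - b) j) * v j = if j = i then δ * v i else 0 := by
      intro j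
      by_cases hj : j = i
      · subst hj; simp [hδ, PiLp.sub_apply, RCLike.inner_apply]
      · simp [hj, PiLp.sub_apply, hdiff j hj]
    simp only [RCLike.inner_apply, starRingEnd_apply, star_trivial]
    rw [Finset.sum_congr rfl fun j _ => (mul_comm (v j) ((b' - b) j)).trans (this j)]
    simp
  have hinner2 : ⟪v, v⟫ = ∑ j, (v j)^2 := by
    rw [PiLp.inner_apply]
    simp [RCLike.inner_apply, sq]
  -- sum of v is zero
  have hsum : ∑ j, v j = 0 := by
    have h1 := hQsub (hproj b').1
    have h2 := hQsub (hproj b).1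
    simp only [Set.mem_setOf_eq] at h1 h2
    simp [hvdef, PiLp.sub_apply, Finset.sum_sub_distrib, h1, h2]
  -- Cauchy–Schwarz on the remaining coordinates
  have hcard : (univ.erase i).card = I - 1 := by
    rw [Finset.card_erase_of_mem (Finset.mem_univ i), Finset.card_univ, Fintype.card_fin]
  have hcs : (v i)^2 ≤ ((I:ℝ) - 1) * ∑ j ∈ univ.erase i, (v j)^2 := by
    have hsum' : ∑ j ∈ univ.erase i, v j = - v i := by
      have := Finset.sum_erase_add univ v (Finset.mem_univ i)
      linarith [this, hsum]
    have := sq_sum_le_card_mul_sum_sq (s := univ.erase i) (f := fun j => v j)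
    rw [hsum'] at this
    have hcast : ((univ.erase i).card : ℝ) = (I:ℝ) - 1 := by
      rw [hcard]
      have : (1:ℕ) ≤ I := by omega
      push_cast [Nat.cast_sub this]
      ring
    calc (v i)^2 = (-v i)^2 := by ring
      _ ≤ ((univ.erase i).card : ℝ) * ∑ j ∈ univ.erase i, (v j)^2 := this
      _ = ((I:ℝ) - 1) * ∑ j ∈ univ.erase i, (v j)^2 := by rw [hcast]
  have hsplit : ∑ j, (v j)^2 = (v i)^2 + ∑ j ∈ univ.erase i, (v j)^2 := by
    rw [← Finset.add_sum_erase univ (fun j => (v j)^2) (Finset.mem_univ i)]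
  have hIpos : (0:ℝ) < (I:ℝ) := by positivity
  have hI1 : (1:ℝ) ≤ (I:ℝ) - 1 := by
    have : (2:ℝ) ≤ (I:ℝ) := by exact_mod_cast hI
    linarith
  -- main inequality: δ * v i ≥ (I/(I-1)) * (v i)^2
  have hmain : ((I:ℝ)/((I:ℝ)-1)) * (v i)^2 ≤ δ * v i := by
    have hS : ((I:ℝ)/((I:ℝ)-1)) * (v i)^2 ≤ ∑ j, (v j)^2 := by
      rw [hsplit]
      have h1' : (v i)^2 / ((I:ℝ)-1) ≤ ∑ j ∈ univ.erase i, (v j)^2 := by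
        rw [div_le_iff₀ (by linarith)]
        linarith [hcs]
      have : ((I:ℝ)/((I:ℝ)-1)) * (v i)^2 = (v i)^2 + (v i)^2 / ((I:ℝ)-1) := by
        field_simp
        ring
      linarith
    calc ((I:ℝ)/((I:ℝ)-1)) * (v i)^2 ≤ ∑ j, (v j)^2 := hS
      _ = ⟪v, v⟫ := hinner2.symm
      _ ≤ ⟪b' - b, v⟫ := hfirm
      _ = δ * v i := hinner1
  have hvi : q b' i - q b i = v i := by simp [hvdef]
  rw [hvi]
  by_cases hsign : v i ≤ 0
  · have : 0 ≤ (((I:ℝ)-1)/(I:ℝ)) * δ := by positivity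
    linarith
  · push_neg at hsign
    have hratio : ((I:ℝ)/((I:ℝ)-1)) * v i ≤ δ := by
      have := hmain
      rw [sq] at this
      nlinarith
    have hIm : (0:ℝ) < (I:ℝ) - 1 := by linarith
    rw [div_mul_eq_mul_div, div_le_iff₀ hIm] at hratio
    rw [div_mul_eq_mul_div, le_div_iff₀ hIpos]
    linarith
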